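/- If K is not a prime field (so there exists a non-K-linear additive group endomorphism φ of K), n ≥ 2, and S = Sym₁(K) ⊕ Sym_{n−1}(K) is the space of symmetric n×n block-diagonal matrices with blocks of sizes 1 and n−1, then the map F sending M = (m_{i,j}) ∈ S to the vector (φ(m_{1,1}), 0, …, 0)ᵀ is a range-compatible group homomorphism on S that is not K-linear. -/

import Mathlib

open Matrix

/-- If `φ` is a non-linear additive endomorphism of `K` and `S` is the space of
symmetric block-diagonal matrices with blocks of sizes `1` and `n-1` (here
`n = m + 2 ≥ 2`), then `M ↦ (φ(m₁₁),0,…,0)ᵀ` is a range-compatible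
homomorphism on `S` that is not `K`-linear. -/
theorem nonstandard_rangeCompatible_hom_on_block_diagonal
    (K : Type*) [Field K] (φ : K →+ K)
    (hφ : ¬ ∀ lam x : K, φ (lam * x) = lam * φ x)
    (m : ℕ) :
    (∀ M ∈ {M : Matrix (Fin (m + 2)) (Fin (m + 2)) K |
        M.IsSymm ∧ ∀ i : Fin (m + 2), i ≠ 0 → M i 0 = 0 ∧ M 0 i = 0},
      ∀ N ∈ {M : Matrix (Fin (m + 2)) (Fin (m + 2)) K |
        M.IsSymm ∧ ∀ i : Fin (m + 2), i ≠ 0 → M i 0 = 0 ∧ M 0 i = 0},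
      (fun i => if i = 0 then φ ((M + N) 0 0) else 0)
        = (fun i : Fin (m + 2) => if i = 0 then φ (M 0 0) else 0)
          + (fun i : Fin (m + 2) => if i = 0 then φ (N 0 0) else 0)) ∧
    (∀ M ∈ {M : Matrix (Fin (m + 2)) (Fin (m + 2)) K |
        M.IsSymm ∧ ∀ i : Fin (m + 2), i ≠ 0 → M i 0 = 0 ∧ M 0 i = 0},
      ∃ X : Fin (m + 2) → K,
        M.mulVec X = fun i => if i = 0 then φ (M 0 0) else 0) ∧
    ¬ (∀ M ∈ {M : Matrix (Fin (m + 2)) (Fin (m + 2)) K |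
        M.IsSymm ∧ ∀ i : Fin (m + 2), i ≠ 0 → M i 0 = 0 ∧ M 0 i = 0},
      ∀ lam : K,
        (fun i : Fin (m + 2) => if i = 0 then φ ((lam • M) 0 0) else 0)
          = lam • fun i : Fin (m + 2) => if i = 0 then φ (M 0 0) else 0) := by
  refine ⟨?_, ?_, ?_⟩
  · intro M _ N _
    funext i
    by_cases h : i = 0 <;> simp [h, Matrix.add_apply, map_add, Pi.add_apply]
  · intro M hM
    obtain ⟨-, hcol⟩ := hM
    by_cases h0 : M 0 0 = 0
    · refine ⟨0, ?_⟩
      funext i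
      by_cases h : i = 0 <;> simp [h, h0, Matrix.mulVec_zero]
    · refine ⟨fun j => if j = 0 then φ (M 0 0) / M 0 0 else 0, ?_⟩
      funext i
      simp only [Matrix.mulVec, dotProduct]
      rw [Finset.sum_eq_single 0]
      · by_cases h : i = 0
        · simp only [h, if_true]; rw [mul_div_cancel₀ _ h0]
        · simp [h, (hcol i h).1]
      · intro b _ hb; simp [hb]
      · simp
  · intro H
    apply hφ
    intro lam x
    set M : Matrix (Fin (m + 2)) (Fin (m + 2)) K :=
      fun i j => if i = 0 ∧ j = 0 then x else 0 with hMdef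
    have hMS : M ∈ {M : Matrix (Fin (m + 2)) (Fin (m + 2)) K |
        M.IsSymm ∧ ∀ i : Fin (m + 2), i ≠ 0 → M i 0 = 0 ∧ M 0 i = 0} := by
      constructor
      · ext i j
        show M j i = M i j
        simp [hMdef, Matrix.transpose_apply, and_comm]
      · intro i hi
        simp [hMdef, hi]
    have := congrFun (H M hMS lam) 0
    rw [if_pos rfl, Matrix.smul_apply] at this
    simpa [hMdef, Matrix.smul_apply, smul_eq_mul] using this
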